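/- The function C(v) = 2v·arsinh(v/2) − 2√(4 + v²) + 4 satisfies (1/2)·|s|·log(1 + |s|) ≤ C(s) ≤ 2·|s|·log(1 + |s|) for all s ∈ ℝ. -/

import Mathlib

noncomputable def C (v : ℝ) : ℝ :=
  2 * v * Real.arsinh (v / 2) - 2 * Real.sqrt (4 + v ^ 2) + 4

open Real

lemma sqrt_four_add_sq (t : ℝ) : Real.sqrt (4 + t ^ 2) = 2 * Real.sqrt (1 + (t / 2) ^ 2) := by
  rw [show (4 + t ^ 2 : ℝ) = 2 ^ 2 * (1 + (t / 2) ^ 2) by ring, Real.sqrt_mul (by positivity),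
    Real.sqrt_sq (by norm_num)]

/-- Derivative of `g t = C t - (1/2) t log (1+t)`. -/
lemma hasDerivAt_g (t : ℝ) (ht : -1 < t) :
    HasDerivAt (fun t => C t - 1 / 2 * t * Real.log (1 + t))
      (2 * Real.arsinh (t / 2) - (1 / 2 * Real.log (1 + t) + t / (2 * (1 + t)))) t := by
  have h1t : (0:ℝ) < 1 + t := by linarith
  have hs1 : (0:ℝ) < Real.sqrt (1 + (t / 2) ^ 2) := Real.sqrt_pos.2 (by positivity)
  have hA : HasDerivAt (fun t : ℝ => Real.arsinh (t / 2))
      ((Real.sqrt (1 + (t / 2) ^ 2))⁻¹ * (1 / 2)) t := by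
    have := (Real.hasDerivAt_arsinh (t / 2)).comp t ((hasDerivAt_id t).div_const 2)
    exact this
  have hB : HasDerivAt (fun t : ℝ => 2 * t * Real.arsinh (t / 2))
      (2 * Real.arsinh (t / 2) + 2 * t * ((Real.sqrt (1 + (t / 2) ^ 2))⁻¹ * (1 / 2))) t := by
    simpa using (((hasDerivAt_id t).const_mul 2).fun_mul hA)
  have hin : HasDerivAt (fun t : ℝ => 4 + t ^ 2) (2 * t) t := by
    simpa using (hasDerivAt_pow 2 t).const_add 4
  have hS : HasDerivAt (fun t : ℝ => 2 * Real.sqrt (4 + t ^ 2))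
      (2 * (2 * t / (2 * Real.sqrt (4 + t ^ 2)))) t :=
    ((hin.sqrt (by positivity)).const_mul 2)
  have hL : HasDerivAt (fun t : ℝ => 1 / 2 * t * Real.log (1 + t))
      (1 / 2 * Real.log (1 + t) + 1 / 2 * t * (1 / (1 + t))) t := by
    have hlog : HasDerivAt (fun t : ℝ => Real.log (1 + t)) (1 / (1 + t)) t := by
      simpa using (((hasDerivAt_id t).const_add 1).log (by positivity))
    simpa [mul_comm, mul_assoc] using (((hasDerivAt_id t).const_mul (1/2:ℝ)).fun_mul hlog)
  have h := ((hB.fun_sub hS).add_const 4).fun_sub hL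
  refine h.congr_deriv ?_
  have hsr : Real.sqrt (4 + t ^ 2) = 2 * Real.sqrt (1 + (t / 2) ^ 2) := sqrt_four_add_sq t
  rw [hsr]
  field_simp
  ring

lemma arsinh_ge (x : ℝ) (hx : 0 ≤ x) : Real.log (1 + x) ≤ Real.arsinh x := by
  rw [Real.arsinh]
  apply Real.log_le_log (by positivity)
  have h := Real.sqrt_le_sqrt (show (1:ℝ) ≤ 1 + x ^ 2 by nlinarith)
  rw [Real.sqrt_one] at h
  linarith

lemma arsinh_le (x : ℝ) (hx : 0 ≤ x) : Real.arsinh x ≤ Real.log (1 + 2 * x) := by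
  rw [Real.arsinh]
  apply Real.log_le_log
  · positivity
  · have : Real.sqrt (1 + x ^ 2) ≤ 1 + x := by
      rw [show (1 + x : ℝ) = Real.sqrt ((1 + x) ^ 2) by rw [Real.sqrt_sq (by linarith)]]
      exact Real.sqrt_le_sqrt (by nlinarith)
    linarith

/-- The key derivative nonnegativity. -/
lemma deriv_nonneg (t : ℝ) (ht : 0 ≤ t) :
    0 ≤ 2 * Real.arsinh (t / 2) - (1 / 2 * Real.log (1 + t) + t / (2 * (1 + t))) := by
  have h1t : (0:ℝ) < 1 + t := by linarith
  have h1 : Real.log (1 + t / 2) ≤ Real.arsinh (t / 2) := arsinh_ge _ (by linarith)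
  -- log (1 + t/2) ≥ (1/2) log (1 + t)
  have h2 : Real.log (1 + t) ≤ 2 * Real.log (1 + t / 2) := by
    have := Real.log_le_log h1t (show (1 + t : ℝ) ≤ (1 + t / 2) ^ 2 by nlinarith)
    rwa [Real.log_pow, Nat.cast_ofNat] at this
  -- log (1 + t/2) ≥ t / (2 (1 + t))
  have h3 : t / (2 * (1 + t)) ≤ Real.log (1 + t / 2) := by
    have := Real.one_sub_inv_le_log_of_pos (show (0:ℝ) < 1 + t / 2 by linarith)
    have hinv : 1 - (1 + t / 2)⁻¹ = t / (2 + t) := by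
      field_simp
      ring
    rw [hinv] at this
    have : t / (2 * (1 + t)) ≤ t / (2 + t) := by
      apply div_le_div_of_nonneg_left ht (by linarith) <;> linarith
    linarith [Real.one_sub_inv_le_log_of_pos (show (0:ℝ) < 1 + t / 2 by linarith),
      hinv ▸ (Real.one_sub_inv_le_log_of_pos (show (0:ℝ) < 1 + t / 2 by linarith))]
  linarith

lemma lower_bound (t : ℝ) (ht : 0 ≤ t) : 1 / 2 * t * Real.log (1 + t) ≤ C t := by
  set g : ℝ → ℝ := fun t => C t - 1 / 2 * t * Real.log (1 + t) with hg
  have hmono : MonotoneOn g (Set.Ici (0:ℝ)) := by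
    apply monotoneOn_of_deriv_nonneg (convex_Ici 0)
    · intro x hx
      exact ((hasDerivAt_g x (by simp at hx; linarith)).continuousAt).continuousWithinAt
    · intro x hx
      rw [interior_Ici] at hx
      exact ((hasDerivAt_g x (by simp at hx; linarith)).differentiableAt).differentiableWithinAt
    · intro x hx
      rw [interior_Ici] at hx
      rw [(hasDerivAt_g x (by simp at hx; linarith)).deriv]
      exact deriv_nonneg x (le_of_lt hx)
  have h0 : g 0 = 0 := by
    have : Real.sqrt 4 = 2 := by
      rw [show (4:ℝ) = 2 ^ 2 by norm_num, Real.sqrt_sq two_pos.le]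
    simp [hg, C, this]
    norm_num
  have := hmono (Set.self_mem_Ici) (Set.mem_Ici.2 ht) ht
  rw [h0] at this
  simp only [hg] at this
  linarith

lemma upper_bound (t : ℝ) (ht : 0 ≤ t) : C t ≤ 2 * t * Real.log (1 + t) := by
  have h1 : Real.arsinh (t / 2) ≤ Real.log (1 + t) := by
    have h := arsinh_le (t / 2) (by linarith)
    rwa [show 1 + 2 * (t / 2) = 1 + t by ring] at h
  have h2 : (2:ℝ) ≤ Real.sqrt (4 + t ^ 2) := by
    rw [show (2:ℝ) = Real.sqrt 4 by rw [show (4:ℝ) = 2^2 by norm_num, Real.sqrt_sq]; norm_num]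
    exact Real.sqrt_le_sqrt (by nlinarith)
  have h3 : 2 * t * Real.arsinh (t / 2) ≤ 2 * t * Real.log (1 + t) :=
    mul_le_mul_of_nonneg_left h1 (by linarith)
  simp only [C]
  linarith

lemma C_abs (s : ℝ) : C |s| = C s := by
  rcases abs_cases s with ⟨h, _⟩ | ⟨h, _⟩
  · rw [h]
  · rw [h]
    simp only [C, neg_div, Real.arsinh_neg, even_two.neg_pow]
    ring

theorem c_growth (s : ℝ) :
    (1 / 2) * |s| * Real.log (1 + |s|) ≤ C s ∧
      C s ≤ 2 * |s| * Real.log (1 + |s|) := by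
  rw [← C_abs s]
  exact ⟨lower_bound |s| (abs_nonneg s), upper_bound |s| (abs_nonneg s)⟩
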